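/- Let A be a unital associative ℂ-algebra and τ : A → ℂ a linear functional with τ(xy) = τ(yx) for all x,y ∈ A. Let n ≥ 1 and x_1,…,x_n ∈ A. For z = (z_1,…,z_n) ∈ ℂⁿ define the matrices a_k(z) ∈ M_n(ℂ) by a_k(z) = z_k e_{k,k+1} + conj(z_k) e_{k+1,k} for 1 ≤ k < n and a_n(z) = z_n e_{n,1} + conj(z_n) e_{1,n}. Then the function z ↦ (tr_n ⊗ τ)((a_1(z) ⊗ x_1 + ⋯ + a_n(z) ⊗ x_n)^n) is a polynomial function in the 2n variables z_1,…,z_n, conj(z_1),…,conj(z_n), and the coefficient of the monomial z_1 z_2 ⋯ z_n in this polynomial equals τ(x_1 x_2 ⋯ x_n). -/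

import Mathlib

open scoped Matrix ComplexConjugate

open MvPolynomial TensorProduct

open Fin.NatCast

/-- `a ⊗ x`: the matrix with entries `a i j • x`, an element of `M_n(A)`. -/
noncomputable def matTensor {m : ℕ} {A : Type*} [Ring A] [Module ℂ A]
    (a : Matrix (Fin m) (Fin m) ℂ) (x : A) : Matrix (Fin m) (Fin m) A :=
  Matrix.of fun i j => a i j • x

section Aux

variable {A : Type*} [Ring A] [Algebra ℂ A]

lemma trace_shift_one (τ : A →ₗ[ℂ] ℂ) (hτ : ∀ a b : A, τ (a * b) = τ (b * a))
    {N : ℕ} (y : Fin (N+1) → A) :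
    τ ((List.ofFn fun t => y (t + 1)).prod) = τ ((List.ofFn y).prod) := by
  have h1 : (List.ofFn fun t : Fin (N+1) => y (t + 1))
      = (List.ofFn fun i : Fin N => y i.succ).concat (y 0) := by
    rw [List.ofFn_succ' (fun t : Fin (N+1) => y (t + 1))]
    simp [Fin.coeSucc_eq_succ, Fin.last_add_one]
  rw [h1, List.concat_eq_append, List.prod_append, List.prod_singleton,
    hτ, List.ofFn_succ, List.prod_cons]

lemma trace_shift (τ : A →ₗ[ℂ] ℂ) (hτ : ∀ a b : A, τ (a * b) = τ (b * a))
    {N : ℕ} (x : Fin (N+1) → A) (j : ℕ) :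
    τ ((List.ofFn fun t => x ((j : Fin (N+1)) + t)).prod) = τ ((List.ofFn x).prod) := by
  induction j with
  | zero => simp
  | succ j ih =>
    rw [← ih, ← trace_shift_one τ hτ (fun t => x ((j : Fin (N+1)) + t))]
    have : (fun t : Fin (N+1) => x (((j+1 : ℕ) : Fin (N+1)) + t))
        = fun t => x ((j : Fin (N+1)) + (t + 1)) := by
      funext t; congr 1; push_cast; abel
    rw [this]

variable {σ : Type*}

noncomputable def Tmap (τ : A →ₗ[ℂ] ℂ) :
    (MvPolynomial σ ℂ ⊗[ℂ] A) →ₗ[ℂ] MvPolynomial σ ℂ :=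
  (TensorProduct.rid ℂ (MvPolynomial σ ℂ)).toLinearMap ∘ₗ
    TensorProduct.map LinearMap.id τ

@[simp] lemma Tmap_tmul (τ : A →ₗ[ℂ] ℂ) (p : MvPolynomial σ ℂ) (x : A) :
    Tmap τ (p ⊗ₜ x) = τ x • p := by
  simp [Tmap]

noncomputable def Emap (v : σ → ℂ) : (MvPolynomial σ ℂ ⊗[ℂ] A) →ₐ[ℂ] A :=
  (Algebra.TensorProduct.lid ℂ A).toAlgHom.comp
    (Algebra.TensorProduct.map (MvPolynomial.aeval v) (AlgHom.id ℂ A))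

@[simp] lemma Emap_tmul (v : σ → ℂ) (p : MvPolynomial σ ℂ) (x : A) :
    Emap v (p ⊗ₜ x) = MvPolynomial.eval v p • x := by
  have : MvPolynomial.aeval v p = MvPolynomial.eval v p := by
    rw [MvPolynomial.aeval_def, MvPolynomial.eval]; rfl
  simp [Emap, Algebra.TensorProduct.lid_tmul, this]

lemma eval_Tmap (τ : A →ₗ[ℂ] ℂ) (v : σ → ℂ) (w : MvPolynomial σ ℂ ⊗[ℂ] A) :
    MvPolynomial.eval v (Tmap τ w) = τ (Emap v w) := by
  induction w with
  | zero => simp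
  | tmul p x => simp [smul_eq_C_mul, mul_comm]
  | add w₁ w₂ h₁ h₂ => simp [map_add, h₁, h₂]

end Aux

section KillInr

open MvPolynomial

variable {σ₁ σ₂ : Type*}

lemma coeff_killInr (m : (σ₁ ⊕ σ₂) →₀ ℕ) (hm : ∀ k, m (Sum.inr k) = 0)
    (p : MvPolynomial (σ₁ ⊕ σ₂) ℂ) :
    coeff m (aeval (R := ℂ) (Sum.elim (fun j => X (Sum.inl j)) (fun _ => (0 : MvPolynomial (σ₁ ⊕ σ₂) ℂ))) p)
      = coeff m p := by
  have key : ∀ d : (σ₁ ⊕ σ₂) →₀ ℕ, ∀ c : ℂ,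
      coeff m (aeval (R := ℂ) (Sum.elim (fun j => X (Sum.inl j)) (fun _ => (0 : MvPolynomial (σ₁ ⊕ σ₂) ℂ)))
        (monomial d c)) = coeff m (monomial d c) := by
    intro d c
    by_cases hd : ∀ k, d (Sum.inr k) = 0
    · have : aeval (R := ℂ) (Sum.elim (fun j => X (Sum.inl j)) (fun _ => (0 : MvPolynomial (σ₁ ⊕ σ₂) ℂ)))
          (monomial d c) = monomial d c := by
        rw [aeval_monomial, monomial_eq]
        congr 1
        refine Finsupp.prod_congr fun j hj => ?_
        cases j with
        | inl j => rfl
        | inr k => exact absurd (hd k) (Finsupp.mem_support_iff.mp hj)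
      rw [this]
    · push_neg at hd
      obtain ⟨k, hk⟩ := hd
      have h0 : aeval (R := ℂ) (Sum.elim (fun j => X (Sum.inl j)) (fun _ => (0 : MvPolynomial (σ₁ ⊕ σ₂) ℂ)))
          (monomial d c) = 0 := by
        rw [aeval_monomial, Finsupp.prod]
        rw [Finset.prod_eq_zero (Finsupp.mem_support_iff.mpr hk)
          (by simp [zero_pow hk])]
        simp
      have : d ≠ m := fun h => hk (h ▸ hm k)
      classical
      rw [h0, coeff_zero, coeff_monomial, if_neg this]
  conv_rhs => rw [← p.support_sum_monomial_coeff]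
  conv_lhs => rw [← p.support_sum_monomial_coeff]
  rw [map_sum, coeff_sum, coeff_sum]
  exact Finset.sum_congr rfl fun d _ => key d _

end KillInr

section ShiftMat

variable {S : Type*} [Ring S] {N : ℕ}

/-- the forward cyclic shift matrix weighted by `u` -/
def shiftMat (u : Fin (N+1) → S) : Matrix (Fin (N+1)) (Fin (N+1)) S :=
  Matrix.of fun i j => if j = i + 1 then u i else 0

/-- ordered product `u i * u (i+1) * ⋯ * u (i+m-1)` -/
def Wprod (u : Fin (N+1) → S) (i : Fin (N+1)) : ℕ → S
  | 0 => 1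
  | m + 1 => Wprod u i m * u (i + (m : Fin (N+1)))

lemma shiftMat_pow (u : Fin (N+1) → S) (m : ℕ) (i j : Fin (N+1)) :
    ((shiftMat u) ^ m) i j = if j = i + (m : Fin (N+1)) then Wprod u i m else 0 := by
  induction m generalizing j with
  | zero =>
    simp only [pow_zero, Matrix.one_apply, Nat.cast_zero, add_zero, Wprod]
    exact if_congr (by tauto) rfl rfl
  | succ m ih =>
    rw [pow_succ, Matrix.mul_apply]
    have : ∀ l : Fin (N+1), ((shiftMat u) ^ m) i l * shiftMat u l j
        = if l = i + (m : Fin (N+1)) then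
            (if j = l + 1 then Wprod u i m * u l else 0) else 0 := by
      intro l
      rw [ih]
      by_cases h : l = i + (m : Fin (N+1)) <;> simp [h, shiftMat, mul_ite]
    rw [Finset.sum_congr rfl fun l _ => this l, Finset.sum_ite_eq' _ (i + (m : Fin (N+1)))]
    simp only [Finset.mem_univ, if_true, Wprod]
    have hc : (((m+1 : ℕ)) : Fin (N+1)) = (m : Fin (N+1)) + 1 := by push_cast; ring
    rw [hc, ← add_assoc]

lemma Wprod_eq_list (u : Fin (N+1) → S) (i : Fin (N+1)) (m : ℕ) :
    Wprod u i m = (List.ofFn fun t : Fin m => u (i + ((t : ℕ) : Fin (N+1)))).prod := by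
  induction m with
  | zero => simp [Wprod]
  | succ m ih =>
    rw [List.ofFn_succ', List.concat_eq_append, List.prod_append, List.prod_singleton]
    simp only [Fin.coe_castSucc, Fin.val_last]
    rw [Wprod, ih]

variable {B C : Type*} [Ring B] [Algebra ℂ B] [Ring C] [Algebra ℂ C]

lemma Wprod_tmul (p : Fin (N+1) → B) (y : Fin (N+1) → C) (i : Fin (N+1)) (m : ℕ) :
    Wprod (fun k => p k ⊗ₜ[ℂ] y k) i m = Wprod p i m ⊗ₜ[ℂ] Wprod y i m := by
  induction m with
  | zero =>
    show (1 : B ⊗[ℂ] C) = 1 ⊗ₜ[ℂ] 1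
    rw [Algebra.TensorProduct.one_def]
  | succ m ih => rw [Wprod, ih, Wprod, Wprod, Algebra.TensorProduct.tmul_mul_tmul]

end ShiftMat

section Monomials

open MvPolynomial

lemma prod_X_monomial {ι σ : Type*} (s : Finset ι) (f : ι → σ) :
    (∏ k ∈ s, (X (f k) : MvPolynomial σ ℂ))
      = monomial (∑ k ∈ s, Finsupp.single (f k) 1) 1 := by
  classical
  induction s using Finset.induction with
  | empty => simp [monomial_zero']
  | insert _ _ h ih =>
    rw [Finset.prod_insert h, Finset.sum_insert h, ih, X, monomial_mul, mul_one]

lemma Wpoly_eq {N : ℕ} (i : Fin (N+1)) :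
    (Wprod (fun k => (X (Sum.inl k) : MvPolynomial (Fin (N+1) ⊕ Fin (N+1)) ℂ)) i (N+1))
      = monomial (∑ j : Fin (N+1), Finsupp.single (Sum.inl j) 1) 1 := by
  rw [Wprod_eq_list, List.prod_ofFn]
  have h1 : ∀ t : Fin (N+1), i + ((t:ℕ) : Fin (N+1)) = i + t := by simp
  calc (∏ t : Fin (N+1), (X (Sum.inl (i + ((t:ℕ) : Fin (N+1)))) : MvPolynomial (Fin (N+1) ⊕ Fin (N+1)) ℂ))
      = ∏ t : Fin (N+1), X (Sum.inl (i + t)) := by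
        exact Finset.prod_congr rfl fun t _ => by rw [h1]
    _ = ∏ k : Fin (N+1), X (Sum.inl k) := Fintype.prod_equiv (Equiv.addLeft i) _ _ (fun t => rfl)
    _ = monomial (∑ j : Fin (N+1), Finsupp.single (Sum.inl j) 1) 1 := prod_X_monomial _ _

end Monomials

/-- Let `A` be a unital associative `ℂ`-algebra with a tracial linear functional `τ`.  With
`a_k(z) = z_k e_{k,k+1} + conj(z_k) e_{k+1,k}` (indices cyclic mod `n`), the function
`z ↦ (tr_n ⊗ τ)((Σ_k a_k(z) ⊗ x_k)^n)` is a polynomial in `z₁, …, zₙ, conj z₁, …, conj zₙ`,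
and the coefficient of `z₁ z₂ ⋯ zₙ` equals `τ(x₁ x₂ ⋯ xₙ)`. -/
theorem coeff_of_cyclic_linearization
    {A : Type*} [Ring A] [Algebra ℂ A]
    (τ : A →ₗ[ℂ] ℂ) (hτtr : ∀ x y : A, τ (x * y) = τ (y * x))
    (n : ℕ) (hn : 1 ≤ n) (x : Fin n → A)
    (a : (Fin n → ℂ) → Fin n → Matrix (Fin n) (Fin n) ℂ)
    (ha : ∀ (z : Fin n → ℂ) (k : Fin n), a z k =
      z k • Matrix.single k (finRotate n k) (1 : ℂ) +
        conj (z k) • Matrix.single (finRotate n k) k (1 : ℂ)) :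
    ∃ P : MvPolynomial (Fin n ⊕ Fin n) ℂ,
      (∀ z : Fin n → ℂ,
        (n : ℂ)⁻¹ * ∑ i, τ (((∑ k, matTensor (a z k) (x k)) ^ n) i i) =
          MvPolynomial.eval (Sum.elim z (fun j => conj (z j))) P) ∧
      MvPolynomial.coeff (∑ j : Fin n, Finsupp.single (Sum.inl j) 1) P =
        τ (List.ofFn x).prod := by
  classical
  obtain ⟨N, rfl⟩ : ∃ N, n = N + 1 := ⟨n - 1, (Nat.succ_pred_eq_of_pos hn).symm⟩
  set σ := (Fin (N+1) ⊕ Fin (N+1)) with hσ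
  set Mfull : Matrix (Fin (N+1)) (Fin (N+1)) (MvPolynomial σ ℂ ⊗[ℂ] A) :=
    Matrix.of (fun i j =>
      (if j = i + 1 then (X (Sum.inl i) : MvPolynomial σ ℂ) ⊗ₜ[ℂ] x i else 0)
      + (if i = j + 1 then (X (Sum.inr j) : MvPolynomial σ ℂ) ⊗ₜ[ℂ] x j else 0)) with hMfull
  refine ⟨MvPolynomial.C (((N+1 : ℕ) : ℂ))⁻¹ * ∑ i, Tmap τ ((Mfull ^ (N+1)) i i), ?_, ?_⟩
  · -- evaluation identity
    intro z
    set v : σ → ℂ := Sum.elim z (fun j => conj (z j)) with hv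
    have hmap : (Emap (A := A) v).mapMatrix Mfull = ∑ k, matTensor (a z k) (x k) := by
      ext i j
      have hL : (Emap (A := A) v).mapMatrix Mfull i j
          = (if j = i + 1 then z i • x i else 0)
            + (if i = j + 1 then conj (z j) • x j else 0) := by
        simp [hMfull, AlgHom.mapMatrix_apply, Matrix.map_apply, apply_ite (Emap (A := A) v), hv,
            apply_ite (Emap (A := A) (Sum.elim z (fun j => conj (z j))))]
      have hR : (∑ k, matTensor (a z k) (x k)) i j
          = (if j = i + 1 then z i • x i else 0)
            + (if i = j + 1 then conj (z j) • x j else 0) := by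
        rw [Matrix.sum_apply]
        have hterm : ∀ k, matTensor (a z k) (x k) i j
            = (if k = i then (if j = i + 1 then z i • x i else 0) else 0)
              + (if k = j then (if i = j + 1 then conj (z j) • x j else 0) else 0) := by
          intro k
          rw [ha, matTensor]
          simp only [Matrix.of_apply, Matrix.add_apply, Matrix.smul_apply,
            Matrix.single, finRotate_succ_apply, smul_eq_mul,
            mul_ite, mul_one, mul_zero, ite_smul, zero_smul, add_smul]
          congr 1
          · rcases eq_or_ne k i with rfl | hk
            · by_cases hj : j = k + 1 <;> simp [hj, eq_comm]
            · simp [hk]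
          · rcases eq_or_ne k j with rfl | hk
            · by_cases hi : i = k + 1 <;> simp [hi, eq_comm]
            · simp [hk]
        rw [Finset.sum_congr rfl fun k _ => hterm k, Finset.sum_add_distrib,
          Finset.sum_ite_eq' _ i, Finset.sum_ite_eq' _ j]
        simp
      rw [hL, hR]
    -- now the evaluation chain
    have hpow : (∑ k, matTensor (a z k) (x k)) ^ (N+1)
        = (Emap (A := A) v).mapMatrix (Mfull ^ (N+1)) := by
      rw [map_pow, hmap]
    rw [hpow]
    have hdiag : ∀ i : Fin (N+1),
        τ (((Emap (A := A) v).mapMatrix (Mfull ^ (N+1))) i i)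
          = MvPolynomial.eval v (Tmap τ ((Mfull ^ (N+1)) i i)) := fun i => by
      rw [AlgHom.mapMatrix_apply, Matrix.map_apply, eval_Tmap]
    rw [map_mul, MvPolynomial.eval_C, map_sum]
    exact congrArg _ (Finset.sum_congr rfl fun i _ => hdiag i)
  · -- coefficient
    set m : σ →₀ ℕ := ∑ j : Fin (N+1), Finsupp.single (Sum.inl j) 1 with hm'
    have hm : ∀ k : Fin (N+1), m (Sum.inr k) = 0 := by
      intro k
      rw [hm', Finsupp.finset_sum_apply]
      simp [Finsupp.single_apply]
    set φA : MvPolynomial σ ℂ →ₐ[ℂ] MvPolynomial σ ℂ :=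
      MvPolynomial.aeval (Sum.elim (fun j => X (Sum.inl j)) fun _ => 0) with hφA
    set ψ : (MvPolynomial σ ℂ ⊗[ℂ] A) →ₐ[ℂ] (MvPolynomial σ ℂ ⊗[ℂ] A) :=
      Algebra.TensorProduct.map φA (AlgHom.id ℂ A) with hψ'
    have hcoeffψ : ∀ w, MvPolynomial.coeff m (Tmap τ (ψ w)) = MvPolynomial.coeff m (Tmap τ w) := by
      intro w
      induction w with
      | zero => simp
      | tmul p y =>
        rw [hψ', Algebra.TensorProduct.map_tmul, AlgHom.coe_id, id_eq, Tmap_tmul, Tmap_tmul,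
          MvPolynomial.coeff_smul, MvPolynomial.coeff_smul, hφA, coeff_killInr m hm p]
      | add w₁ w₂ h₁ h₂ => rw [map_add, map_add, map_add, MvPolynomial.coeff_add,
          MvPolynomial.coeff_add, h₁, h₂]
    have hψM : ψ.mapMatrix Mfull
        = shiftMat (fun k => (X (Sum.inl k) : MvPolynomial σ ℂ) ⊗ₜ[ℂ] x k) := by
      ext i j
      rw [AlgHom.mapMatrix_apply, Matrix.map_apply]
      show ψ (Mfull i j) = _
      rw [hMfull]
      simp only [Matrix.of_apply, map_add, apply_ite ψ, map_zero, shiftMat]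
      rw [hψ']
      split_ifs <;>
        simp [Algebra.TensorProduct.map_tmul, hφA, TensorProduct.zero_tmul]
    have hterm2 : ∀ i : Fin (N+1),
        MvPolynomial.coeff m (Tmap τ ((Mfull ^ (N+1)) i i)) = τ ((List.ofFn x).prod) := by
      intro i
      rw [← hcoeffψ]
      have h2 : ψ ((Mfull ^ (N+1)) i i)
          = ((shiftMat (fun k => (X (Sum.inl k) : MvPolynomial σ ℂ) ⊗ₜ[ℂ] x k)) ^ (N+1)) i i := by
        rw [← hψM]
        calc ψ ((Mfull ^ (N+1)) i i) = (ψ.mapMatrix (Mfull ^ (N+1))) i i := rfl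
          _ = ((ψ.mapMatrix Mfull) ^ (N+1)) i i := by rw [map_pow]
      rw [h2, shiftMat_pow, if_pos (by simp), Wprod_tmul, Tmap_tmul,
        MvPolynomial.coeff_smul, Wpoly_eq, ← hm', MvPolynomial.coeff_monomial, if_pos rfl]
      rw [smul_eq_mul, mul_one, Wprod_eq_list]
      have := trace_shift τ hτtr x (i : ℕ)
      simpa [Fin.cast_val_eq_self] using this
    rw [MvPolynomial.coeff_C_mul, MvPolynomial.coeff_sum,
      Finset.sum_congr rfl fun i _ => hterm2 i, Finset.sum_const, Finset.card_univ,
      Fintype.card_fin, nsmul_eq_mul, ← mul_assoc,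
      inv_mul_cancel₀ (Nat.cast_ne_zero.2 (Nat.succ_ne_zero N)), one_mul]
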